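/- arXiv:1804.08885 — 2 statements merged into one kernel-verified Lean document; each statement's English description precedes it below -/
import Mathlib

section
/- Let G and H be graphs, let X ⊆ V(G), and let φ be a minimal minor model of H in G. Then the range φ(V(H)) intersects at most |X| + |V(H)| + |E(H)| connected components of G − X. -/
namespace FDel

open scoped Classical

noncomputable section

/-- Reachability inside the vertex set `S` of a simple graph. -/
def ReachIn {V : Type*} (G : SimpleGraph V) (S : Set V) (a b : V) : Prop :=
  Relation.ReflTransGen (fun u v => G.Adj u v ∧ u ∈ S ∧ v ∈ S) a b

/-- `C` is (the vertex set of) a connected component of the subgraph of `G` induced by `S`. -/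
def IsCompOf {V : Type*} (G : SimpleGraph V) (S C : Set V) : Prop :=
  ∃ v ∈ S, C = {w | w ∈ S ∧ ReachIn G S v w}

/-- `tdLE G n S` expresses that the treedepth of the subgraph of `G` induced by `S` is at
most `n`: the empty graph has treedepth `0`, and `G[S]` has treedepth at most `n+1` iff from
every connected component one may delete a vertex leaving treedepth at most `n`. -/
def tdLE {V : Type*} (G : SimpleGraph V) : ℕ → Set V → Prop
  | 0, S => S = ∅
  | n + 1, S => ∀ C, IsCompOf G S C → ∃ v ∈ C, tdLE G n (C \ {v})

/-- The treedepth of `G`. -/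
def treedepth {V : Type*} (G : SimpleGraph V) : ℕ := sInf {n | tdLE G n Set.univ}

/-- A minor model of `H` in `G` whose branch sets are contained in `A`: nonempty, connected,
pairwise disjoint branch sets, with every edge of `H` realized between the branch sets. -/
structure IsMinorModelOn {W V : Type*} (H : SimpleGraph W) (G : SimpleGraph V)
    (A : Set V) (φ : W → Set V) : Prop where
  sub : ∀ w, φ w ⊆ A
  nonempty : ∀ w, (φ w).Nonempty
  conn : ∀ w, ∀ a ∈ φ w, ∀ b ∈ φ w, ReachIn G (φ w) a b
  disj : ∀ w w', w ≠ w' → Disjoint (φ w) (φ w')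
  edge : ∀ w w', H.Adj w w' → ∃ a ∈ φ w, ∃ b ∈ φ w', G.Adj a b

/-- A (finite) graph given abstractly, as a simple graph on `Fin n`. -/
structure FinGraph where
  n : ℕ
  adj : SimpleGraph (Fin n)

/-- `G` has `H` as a minor with all branch sets inside `A` (i.e. `G[A]` has an `H`-minor). -/
def HasMinorOn {V : Type*} (G : SimpleGraph V) (A : Set V) (H : FinGraph) : Prop :=
  ∃ φ, IsMinorModelOn H.adj G A φ

/-- `Y` is an `F`-deletion set of `G[A]`: `Y ⊆ A` and `G[A ∖ Y]` has no `F`-minor. -/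
def FDelSetOn {V : Type*} (F : Set FinGraph) (G : SimpleGraph V) (A Y : Set V) : Prop :=
  Y ⊆ A ∧ ∀ H ∈ F, ¬ HasMinorOn G (A \ Y) H

/-- The minimum size `opt_F(G[A])` of an `F`-deletion set of `G[A]`. -/
def optF {V : Type*} (F : Set FinGraph) (G : SimpleGraph V) (A : Set V) : ℕ :=
  sInf (Set.ncard '' {Y | FDelSetOn F G A Y})

/-- `Y` is an optimal `F`-deletion set of `G`. -/
def IsOptFDel {V : Type*} (F : Set FinGraph) (G : SimpleGraph V) (Y : Set V) : Prop :=
  FDelSetOn F G Set.univ Y ∧ ∀ Y', FDelSetOn F G Set.univ Y' → Y.ncard ≤ Y'.ncard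

section Aux

variable {V : Type*} {G : SimpleGraph V}

lemma reach_mono {S T : Set V} (h : S ⊆ T) {a b : V} (hr : ReachIn G S a b) :
    ReachIn G T a b :=
  Relation.ReflTransGen.mono (fun _ _ hv => ⟨hv.1, h hv.2.1, h hv.2.2⟩) _ _ hr

lemma reach_symm {S : Set V} {a b : V} (hr : ReachIn G S a b) : ReachIn G S b a :=
  haveI : Std.Symm (fun u v : V => G.Adj u v ∧ u ∈ S ∧ v ∈ S) :=
    ⟨fun _ _ hv => ⟨hv.1.symm, hv.2.2, hv.2.1⟩⟩
  (Relation.ReflTransGen.stdSymm (r := fun u v : V => G.Adj u v ∧ u ∈ S ∧ v ∈ S)).symm _ _ hr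

lemma reach_comp_aux {T : Set V} {v₀ : V} (h0 : v₀ ∈ T) {b : V}
    (hb : ReachIn G T v₀ b) :
    ReachIn G {u | u ∈ T ∧ ReachIn G T v₀ u} v₀ b := by
  induction hb with
  | refl => exact .refl
  | tail hac hcd ih =>
      exact ih.tail ⟨hcd.1, ⟨hcd.2.1, hac⟩, ⟨hcd.2.2, hac.tail hcd⟩⟩

lemma reach_in_comp {T : Set V} {v₀ : V} (h0 : v₀ ∈ T) {p q : V}
    (hp : p ∈ {u | u ∈ T ∧ ReachIn G T v₀ u})
    (hq : q ∈ {u | u ∈ T ∧ ReachIn G T v₀ u}) :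
    ReachIn G {u | u ∈ T ∧ ReachIn G T v₀ u} p q :=
  (reach_symm (reach_comp_aux h0 hp.2)).trans (reach_comp_aux h0 hq.2)

lemma reach_exit {Y S : Set V} {a b : V} (hab : ReachIn G Y a b) :
    a ∉ S → b ∈ S →
      ∃ x s, x ∈ Y ∧ x ∉ S ∧ s ∈ S ∧ G.Adj x s ∧ ReachIn G (Y \ S) a x := by
  induction hab using Relation.ReflTransGen.head_induction_on with
  | refl => intro h1 h2; exact absurd h2 h1
  | head h₁ h₂ ih =>
      rename_i a' c
      intro haS hbS
      by_cases hc : c ∈ S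
      · exact ⟨a', c, h₁.2.1, haS, hc, h₁.1, .refl⟩
      · obtain ⟨x, s, hxY, hxS, hsS, hadj, hre⟩ := ih hc hbS
        exact ⟨x, s, hxY, hxS, hsS, hadj,
          hre.head ⟨h₁.1, ⟨h₁.2.1, haS⟩, ⟨h₁.2.2, hc⟩⟩⟩

lemma reach_two_sides {Y S S₂ : Set V}
    (hSY : S ⊆ Y) (hS₂Y : S₂ ⊆ Y)
    (hdisj : ∀ u, u ∈ S → u ∈ S₂ → False)
    (hSint : ∀ p ∈ S, ∀ q ∈ S, ReachIn G S p q)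
    (hS₂int : ∀ p ∈ S₂, ∀ q ∈ S₂, ReachIn G S₂ p q)
    {x s₁ s₂ : V} (hxY : x ∈ Y) (hxS : x ∉ S) (hxS₂ : x ∉ S₂)
    (hs₁ : s₁ ∈ S) (hadj₁ : G.Adj x s₁) (hs₂ : s₂ ∈ S₂) (hadj₂ : G.Adj x s₂)
    {a : V} (hax : ReachIn G Y a x) :
    a ∉ S → a ∉ S₂ →
      ReachIn G (Y \ S) a x ∨ ReachIn G (Y \ S₂) a x := by
  induction hax using Relation.ReflTransGen.head_induction_on with
  | refl => intro _ _; exact Or.inl .refl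
  | head h₁ h₂ ih =>
      rename_i a' c
      intro haS haS₂
      by_cases hcS : c ∈ S
      · have t1 : ReachIn G (Y \ S₂) a' c :=
          .single ⟨h₁.1, ⟨h₁.2.1, haS₂⟩, ⟨h₁.2.2, fun h => hdisj c hcS h⟩⟩
        have t2 : ReachIn G (Y \ S₂) c s₁ :=
          reach_mono (T := Y \ S₂) (fun u hu => ⟨hSY hu, fun h => hdisj u hu h⟩) (hSint c hcS s₁ hs₁)
        have t3 : ReachIn G (Y \ S₂) s₁ x :=
          .single ⟨hadj₁.symm, ⟨hSY hs₁, fun h => hdisj s₁ hs₁ h⟩, ⟨hxY, hxS₂⟩⟩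
        exact Or.inr ((t1.trans t2).trans t3)
      · by_cases hcS₂ : c ∈ S₂
        · have t1 : ReachIn G (Y \ S) a' c :=
            .single ⟨h₁.1, ⟨h₁.2.1, haS⟩, ⟨h₁.2.2, hcS⟩⟩
          have t2 : ReachIn G (Y \ S) c s₂ :=
            reach_mono (T := Y \ S) (fun u hu => ⟨hS₂Y hu, fun h => hdisj u h hu⟩) (hS₂int c hcS₂ s₂ hs₂)
          have t3 : ReachIn G (Y \ S) s₂ x :=
            .single ⟨hadj₂.symm, ⟨hS₂Y hs₂, fun h => hdisj s₂ h hs₂⟩, ⟨hxY, hxS⟩⟩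
          exact Or.inl ((t1.trans t2).trans t3)
        · rcases ih hcS hcS₂ with h | h
          · exact Or.inl (h.head ⟨h₁.1, ⟨h₁.2.1, haS⟩, ⟨h₁.2.2, hcS⟩⟩)
          · exact Or.inr (h.head ⟨h₁.1, ⟨h₁.2.1, haS₂⟩, ⟨h₁.2.2, hcS₂⟩⟩)

lemma comp_eq {T C C' : Set V} (h : IsCompOf G T C) (h' : IsCompOf G T C')
    (hne : (C ∩ C').Nonempty) : C = C' := by
  obtain ⟨v, hv, rfl⟩ := h
  obtain ⟨v', hv', rfl⟩ := h'
  obtain ⟨u, hu, hu'⟩ := hne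
  ext z
  simp only [Set.mem_setOf_eq] at *
  constructor
  · rintro ⟨hz, hr⟩
    exact ⟨hz, hu'.2.trans ((reach_symm hu.2).trans hr)⟩
  · rintro ⟨hz, hr⟩
    exact ⟨hz, hu.2.trans ((reach_symm hu'.2).trans hr)⟩

end Aux

/-- Let `G`, `H` be graphs, `X ⊆ V(G)`, and `φ` a minimal minor model of
`H` in `G`. Then the range `⋃ w, φ w` intersects at most `|X| + |V(H)| + |E(H)|` connected
components of `G − X`. -/
theorem stmt3 {V W : Type*} [Fintype V] [Fintype W]
    (G : SimpleGraph V) (H : SimpleGraph W) (X : Set V) (φ : W → Set V)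
    (hmodel : IsMinorModelOn H G Set.univ φ)
    (hminimal : ∀ φ' : W → Set V, IsMinorModelOn H G Set.univ φ' →
      ¬ ((⋃ w, φ' w) ⊂ (⋃ w, φ w))) :
    {C : Set V | IsCompOf G Xᶜ C ∧ (C ∩ ⋃ w, φ w).Nonempty}.ncard
      ≤ X.ncard + Fintype.card W + H.edgeSet.ncard := by
  classical
  set 𝒞 := {C : Set V | IsCompOf G Xᶜ C ∧ (C ∩ ⋃ w, φ w).Nonempty} with h𝒞
  rcases isEmpty_or_nonempty V with hV | hV
  · have hemp : 𝒞 = ∅ := by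
      ext C
      simp only [h𝒞, Set.mem_setOf_eq, Set.mem_empty_iff_false, iff_false, not_and]
      rintro - ⟨v, -⟩
      exact (IsEmpty.false v)
    rw [hemp, Set.ncard_empty]
    exact Nat.zero_le _
  obtain ⟨junk⟩ := hV
  -- chosen realizing edges
  have tokEx : ∀ e : Sym2 W, ∃ p : V × V, e ∈ H.edgeSet →
      ∃ u v : W, e = s(u, v) ∧ p.1 ∈ φ u ∧ p.2 ∈ φ v ∧ G.Adj p.1 p.2 := by
    intro e
    induction e using Sym2.ind with
    | _ u v =>
      by_cases he : s(u, v) ∈ H.edgeSet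
      · obtain ⟨a, ha, b, hb, hab⟩ := hmodel.edge u v (H.mem_edgeSet.mp he)
        exact ⟨(a, b), fun _ => ⟨u, v, rfl, ha, hb, hab⟩⟩
      · exact ⟨(junk, junk), fun h => absurd h he⟩
  choose tok htok using tokEx
  -- reference vertices
  have rEx : ∀ w : W, ∃ ρ : V, (X ∩ φ w).Nonempty → ρ ∈ X ∩ φ w := by
    intro w
    by_cases h : (X ∩ φ w).Nonempty
    · exact ⟨h.choose, fun _ => h.choose_spec⟩
    · exact ⟨junk, fun h' => absurd h' h⟩
  choose r hr using rEx
  -- the tagging predicate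
  set P : Set V → (V ⊕ (W ⊕ Sym2 W)) → Prop := fun C t =>
    Sum.elim
      (fun x => x ∈ X ∧ ∃ w v' S, x ∈ φ w ∧ v' ∈ φ w ∧ v' ∉ X ∧
        S = {u | u ∈ φ w \ X ∧ ReachIn G (φ w \ X) v' u} ∧ S ⊆ C ∧
        (∃ s ∈ S, G.Adj x s) ∧ ¬ ReachIn G (φ w \ S) (r w) x)
      (Sum.elim (fun w => φ w ⊆ C)
        (fun e => e ∈ H.edgeSet ∧ ((tok e).1 ∈ C ∨ (tok e).2 ∈ C))) t
    with hP
  have key : ∀ C ∈ 𝒞, ∃ t, P C t := by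
    intro C hC
    obtain ⟨hcomp, v, hvC, hvR⟩ := hC
    by_cases h1 : ∃ w, φ w ⊆ C
    · exact ⟨Sum.inr (Sum.inl h1.choose), by
        simp only [hP, Sum.elim_inr, Sum.elim_inl]; exact h1.choose_spec⟩
    by_cases h2 : ∃ e ∈ H.edgeSet, (tok e).1 ∈ C ∨ (tok e).2 ∈ C
    · obtain ⟨e, he, hor⟩ := h2
      exact ⟨Sum.inr (Sum.inr e), by
        simp only [hP, Sum.elim_inr]; exact ⟨he, hor⟩⟩
    push_neg at h1 h2
    obtain ⟨w, hvw⟩ := Set.mem_iUnion.mp hvR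
    obtain ⟨v₀, hv₀, hCeq⟩ := hcomp
    have hvmem := hvC
    rw [hCeq] at hvmem
    simp only [Set.mem_setOf_eq] at hvmem
    obtain ⟨hvXc, hv₀v⟩ := hvmem
    have hvX : v ∉ X := hvXc
    set S := {u | u ∈ φ w \ X ∧ ReachIn G (φ w \ X) v u} with hS
    have hvS : v ∈ S := ⟨⟨hvw, hvX⟩, .refl⟩
    have hSC : S ⊆ C := by
      rintro u ⟨⟨huY, huX⟩, hru⟩
      rw [hCeq]
      simp only [Set.mem_setOf_eq]
      exact ⟨huX, hv₀v.trans (reach_mono (T := Xᶜ) (fun z hz => hz.2) hru)⟩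
    have hSX : ∀ u ∈ S, u ∉ X := fun u hu => hu.1.2
    have hnbr : ∀ x' s', x' ∈ φ w → s' ∈ S → G.Adj x' s' → x' ∉ S → x' ∈ X := by
      intro x' s' hx'Y hs' hadj hx'S
      by_contra hx'X
      exact hx'S ⟨⟨hx'Y, hx'X⟩, hs'.2.tail ⟨hadj.symm, hs'.1, ⟨hx'Y, hx'X⟩⟩⟩
    obtain ⟨y₀, hy₀Y, hy₀C⟩ : ∃ y₀ ∈ φ w, y₀ ∉ C := Set.not_subset.mp (h1 w)
    have hy₀S : y₀ ∉ S := fun h => hy₀C (hSC h)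
    obtain ⟨x₁, s₁, hx₁Y, hx₁S, hs₁S, hadj₁, -⟩ :=
      reach_exit (hmodel.conn w y₀ hy₀Y v hvw) hy₀S hvS
    have hXY : (X ∩ φ w).Nonempty := ⟨x₁, hnbr x₁ s₁ hx₁Y hs₁S hadj₁ hx₁S, hx₁Y⟩
    obtain ⟨hrX, hrY⟩ := hr w hXY
    have hrS : r w ∉ S := fun h => hSX _ h hrX
    have hnotok : ∀ e ∈ H.edgeSet, (tok e).1 ∉ S ∧ (tok e).2 ∉ S := by
      intro e he
      have := h2 e he
      exact ⟨fun h => this.1 (hSC h), fun h => this.2 (hSC h)⟩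
    have hdisc : ∃ z, z ∈ φ w \ S ∧ ¬ ReachIn G (φ w \ S) (r w) z := by
      by_contra hcon
      push_neg at hcon
      have hconn' : ∀ a ∈ φ w \ S, ∀ b ∈ φ w \ S, ReachIn G (φ w \ S) a b :=
        fun a ha b hb => (reach_symm (hcon a ha)).trans (hcon b hb)
      set φ' : W → Set V := fun u => if u = w then φ w \ S else φ u with hφ'
      have hsub' : ∀ u, φ' u ⊆ φ u := by
        intro u
        rw [hφ']
        dsimp only
        split
        · next h => subst h; exact Set.diff_subset
        · exact subset_rfl
      have hmodel' : IsMinorModelOn H G Set.univ φ' := by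
        constructor
        · exact fun u => Set.subset_univ _
        · intro u
          by_cases hu : u = w
          · subst hu
            rw [hφ']
            simp only [if_pos rfl]
            exact ⟨y₀, hy₀Y, hy₀S⟩
          · rw [hφ']
            simp only [if_neg hu]
            exact hmodel.nonempty u
        · intro u a ha b hb
          by_cases hu : u = w
          · subst hu
            rw [hφ'] at ha hb ⊢
            simp only [if_pos rfl] at ha hb ⊢
            exact hconn' a ha b hb
          · rw [hφ'] at ha hb ⊢
            simp only [if_neg hu] at ha hb ⊢
            exact hmodel.conn u a ha b hb
        · intro u u' huu'
          exact (hmodel.disj u u' huu').mono (hsub' u) (hsub' u')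
        · intro u u' hadj
          have hne := hadj.ne
          by_cases hu : u = w
          · subst hu
            have he : s(u, u') ∈ H.edgeSet := H.mem_edgeSet.mpr hadj
            obtain ⟨p, q, heq, htk1, htk2, hGadj⟩ := htok _ he
            have hnt := hnotok _ he
            rcases Sym2.eq_iff.mp heq with ⟨hp, hq⟩ | ⟨hp, hq⟩
            · refine ⟨(tok s(u, u')).1, ?_, (tok s(u, u')).2, ?_, hGadj⟩
              · rw [hφ']; simp only [if_pos rfl]
                refine ⟨?_, hnt.1⟩; rw [← hp] at htk1; exact htk1
              · rw [hφ']; simp only [if_neg (Ne.symm hne)]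
                rw [← hq] at htk2; exact htk2
            · refine ⟨(tok s(u, u')).2, ?_, (tok s(u, u')).1, ?_, hGadj.symm⟩
              · rw [hφ']; simp only [if_pos rfl]
                refine ⟨?_, hnt.2⟩; rw [← hp] at htk2; exact htk2
              · rw [hφ']; simp only [if_neg (Ne.symm hne)]
                rw [← hq] at htk1; exact htk1
          · by_cases hu' : u' = w
            · subst hu'
              have he : s(u, u') ∈ H.edgeSet := H.mem_edgeSet.mpr hadj
              obtain ⟨p, q, heq, htk1, htk2, hGadj⟩ := htok _ he
              have hnt := hnotok _ he
              rcases Sym2.eq_iff.mp heq with ⟨hp, hq⟩ | ⟨hp, hq⟩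
              · refine ⟨(tok s(u, u')).1, ?_, (tok s(u, u')).2, ?_, hGadj⟩
                · rw [hφ']; simp only [if_neg hu]
                  rw [← hp] at htk1; exact htk1
                · rw [hφ']; simp only [if_pos rfl]
                  refine ⟨?_, hnt.2⟩; rw [← hq] at htk2; exact htk2
              · refine ⟨(tok s(u, u')).2, ?_, (tok s(u, u')).1, ?_, hGadj.symm⟩
                · rw [hφ']; simp only [if_neg hu]
                  rw [← hp] at htk2; exact htk2
                · rw [hφ']; simp only [if_pos rfl]
                  refine ⟨?_, hnt.1⟩; rw [← hq] at htk1; exact htk1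
            · obtain ⟨a, ha, b, hb, hab⟩ := hmodel.edge u u' hadj
              refine ⟨a, ?_, b, ?_, hab⟩
              · rw [hφ']; simp only [if_neg hu]; exact ha
              · rw [hφ']; simp only [if_neg hu']; exact hb
      have hssub : (⋃ u, φ' u) ⊂ ⋃ u, φ u := by
        rw [Set.ssubset_def]
        constructor
        · exact Set.iUnion_mono hsub'
        · intro hsup
          have hv' : v ∈ ⋃ u, φ' u := hsup (Set.mem_iUnion.mpr ⟨w, hvw⟩)
          obtain ⟨u, hu⟩ := Set.mem_iUnion.mp hv'
          by_cases huw : u = w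
          · subst huw
            rw [hφ'] at hu
            simp only [if_pos rfl] at hu
            exact hu.2 hvS
          · rw [hφ'] at hu
            simp only [if_neg huw] at hu
            exact Set.disjoint_left.mp (hmodel.disj u w huw) hu hvw
      exact hminimal φ' hmodel' hssub
    obtain ⟨z, hzYS, hzr⟩ := hdisc
    obtain ⟨x, s, hxY, hxS, hsS, hadjx, hreachzx⟩ :=
      reach_exit (hmodel.conn w z hzYS.1 v hvw) hzYS.2 hvS
    have hxX : x ∈ X := hnbr x s hxY hsS hadjx hxS
    have hnr : ¬ ReachIn G (φ w \ S) (r w) x :=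
      fun h => hzr (h.trans (reach_symm hreachzx))
    refine ⟨Sum.inl x, ?_⟩
    simp only [hP, Sum.elim_inl]
    exact ⟨hxX, w, v, S, hxY, hvw, hvX, hS, hSC, ⟨s, hsS, hadjx⟩, hnr⟩
  -- injectivity
  have inj : ∀ C ∈ 𝒞, ∀ C' ∈ 𝒞, ∀ t, P C t → P C' t → C = C' := by
    intro C hC C' hC' t htC htC'
    by_contra hne
    have hdisjCC' : ∀ u, u ∈ C → u ∈ C' → False := by
      intro u hu hu'
      exact hne (comp_eq hC.1 hC'.1 ⟨u, hu, hu'⟩)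
    match t with
    | Sum.inr (Sum.inl w) =>
        simp only [hP, Sum.elim_inr, Sum.elim_inl] at htC htC'
        obtain ⟨a, ha⟩ := hmodel.nonempty w
        exact hdisjCC' a (htC ha) (htC' ha)
    | Sum.inr (Sum.inr e) =>
        simp only [hP, Sum.elim_inr] at htC htC'
        obtain ⟨he, hor⟩ := htC
        obtain ⟨-, hor'⟩ := htC'
        obtain ⟨p, q, heq, htk1, htk2, hGadj⟩ := htok e he
        obtain ⟨vC, hvC, hCeq⟩ := hC.1
        obtain ⟨vC', hvC', hC'eq⟩ := hC'.1
        have hCadj : ∀ a b, a ∈ C → b ∉ X → G.Adj a b → b ∈ C := by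
          intro a b haC hbX hab
          rw [hCeq] at haC ⊢
          simp only [Set.mem_setOf_eq] at haC ⊢
          exact ⟨hbX, haC.2.tail ⟨hab, haC.1, hbX⟩⟩
        have hmemX : ∀ b, b ∈ C' → b ∉ X := by
          intro b hb
          rw [hC'eq] at hb
          exact hb.1
        have hmemXC : ∀ b, b ∈ C → b ∉ X := by
          intro b hb
          rw [hCeq] at hb
          exact hb.1
        rcases hor with h | h <;> rcases hor' with h' | h'
        · exact hdisjCC' _ h h'
        · exact hdisjCC' _ (hCadj _ _ h (hmemX _ h') hGadj) h'
        · exact hdisjCC' _ (hCadj _ _ h (hmemX _ h') hGadj.symm) h'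
        · exact hdisjCC' _ h h'
    | Sum.inl x =>
        simp only [hP, Sum.elim_inl] at htC htC'
        obtain ⟨hxX, w1, v1, S1, hxw1, hv1Y, hv1X, hS1eq, hS1C, ⟨s₁, hs₁, hadj₁⟩, hnr1⟩ := htC
        obtain ⟨-, w2, v2, S2, hxw2, hv2Y, hv2X, hS2eq, hS2C, ⟨s₂, hs₂, hadj₂⟩, hnr2⟩ := htC'
        have hw : w2 = w1 := by
          by_contra hww
          exact Set.disjoint_left.mp (hmodel.disj w2 w1 hww) hxw2 hxw1
        subst hw
        subst hS1eq
        subst hS2eq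
        have hSdisj : ∀ u, u ∈ {u | u ∈ φ w2 \ X ∧ ReachIn G (φ w2 \ X) v1 u} →
            u ∈ {u | u ∈ φ w2 \ X ∧ ReachIn G (φ w2 \ X) v2 u} → False :=
          fun u h h' => hdisjCC' u (hS1C h) (hS2C h')
        have hρ := hr w2 ⟨x, hxX, hxw2⟩
        rcases reach_two_sides (G := G)
            (S := {u | u ∈ φ w2 \ X ∧ ReachIn G (φ w2 \ X) v1 u})
            (S₂ := {u | u ∈ φ w2 \ X ∧ ReachIn G (φ w2 \ X) v2 u})
            (fun u hu => hu.1.1) (fun u hu => hu.1.1)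
            hSdisj
            (fun p hp q hq => reach_in_comp (T := φ w2 \ X) (v₀ := v1) ⟨hv1Y, hv1X⟩ hp hq)
            (fun p hp q hq => reach_in_comp (T := φ w2 \ X) (v₀ := v2) ⟨hv2Y, hv2X⟩ hp hq)
            hxw2 (fun h => h.1.2 hxX) (fun h => h.1.2 hxX)
            hs₁ hadj₁ hs₂ hadj₂
            (hmodel.conn w2 (r w2) hρ.2 x hxw2)
            (fun h => h.1.2 hρ.1) (fun h => h.1.2 hρ.1) with h | h
        · exact hnr1 h
        · exact hnr2 h
  -- build the injection and count
  have key' : ∀ C : Set V, ∃ t, C ∈ 𝒞 → P C t := by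
    intro C
    by_cases h : C ∈ 𝒞
    · obtain ⟨t, ht⟩ := key C h
      exact ⟨t, fun _ => ht⟩
    · exact ⟨Sum.inl junk, fun h' => absurd h' h⟩
  choose F hF using key'
  have hinjOn : Set.InjOn F 𝒞 := by
    intro C hC C' hC' h
    exact inj C hC C' hC' (F C) (hF C hC) (by rw [h]; exact hF C' hC')
  have himg : F '' 𝒞 ⊆ Sum.inl '' X ∪
      Sum.inr '' (Sum.inl '' (Set.univ : Set W) ∪ Sum.inr '' H.edgeSet) := by
    rintro t ⟨C, hC, rfl⟩
    have hPC := hF C hC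
    match hFC : F C with
    | Sum.inl x =>
        rw [hFC] at hPC
        simp only [hP, Sum.elim_inl] at hPC
        exact Or.inl ⟨x, hPC.1, rfl⟩
    | Sum.inr (Sum.inl w) =>
        exact Or.inr ⟨Sum.inl w, Or.inl ⟨w, trivial, rfl⟩, rfl⟩
    | Sum.inr (Sum.inr e) =>
        rw [hFC] at hPC
        simp only [hP, Sum.elim_inr] at hPC
        exact Or.inr ⟨Sum.inr e, Or.inr ⟨e, hPC.1, rfl⟩, rfl⟩
  calc 𝒞.ncard = (F '' 𝒞).ncard := (Set.ncard_image_of_injOn hinjOn).symm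
    _ ≤ (Sum.inl '' X ∪
        Sum.inr '' (Sum.inl '' (Set.univ : Set W) ∪ Sum.inr '' H.edgeSet)).ncard :=
      Set.ncard_le_ncard himg (Set.toFinite _)
    _ ≤ (Sum.inl '' X).ncard +
        (Sum.inr '' (Sum.inl '' (Set.univ : Set W) ∪ Sum.inr '' H.edgeSet)).ncard :=
      Set.ncard_union_le _ _
    _ = X.ncard + (Sum.inl '' (Set.univ : Set W) ∪ Sum.inr '' H.edgeSet).ncard := by
      rw [Set.ncard_image_of_injective _ Sum.inl_injective,
        Set.ncard_image_of_injective _ Sum.inr_injective]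
    _ ≤ X.ncard + ((Sum.inl '' (Set.univ : Set W)).ncard + (Sum.inr '' H.edgeSet).ncard) :=
      Nat.add_le_add_left (Set.ncard_union_le _ _) _
    _ = X.ncard + (Fintype.card W + H.edgeSet.ncard) := by
      rw [Set.ncard_image_of_injective _ Sum.inl_injective,
        Set.ncard_image_of_injective _ Sum.inr_injective,
        Set.ncard_univ, Nat.card_eq_fintype_card]
    _ = X.ncard + Fintype.card W + H.edgeSet.ncard := (Nat.add_assoc _ _ _).symm

end
end FDel
end

section
/- Let F be a set of connected graphs and set n_F := min_{H∈F}|V(H)|. Let G be a graph, X ⊆ V(G), and Y ⊆ V(G) such that G − Y contains no graph of F as a minor, and let X' ⊆ X \ Y with |X'| = n_F. Then strictly fewer than n_F connected components C of G − X contain a connected vertex set S ⊆ V(C) \ Y such that every vertex of X' has a neighbor in S. -/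
namespace FDel

open scoped Classical

noncomputable section

lemma reachIn_mono {V : Type*} {G : SimpleGraph V} {S T : Set V} (h : S ⊆ T) {a b : V}
    (hr : ReachIn G S a b) : ReachIn G T a b :=
  Relation.ReflTransGen.mono (fun _ _ ⟨ha, hu, hv⟩ => ⟨ha, h hu, h hv⟩) _ _ hr

lemma reachIn_symm {V : Type*} {G : SimpleGraph V} {S : Set V} {a b : V}
    (h : ReachIn G S a b) : ReachIn G S b a := by
  have hsym : Symmetric (fun u v => G.Adj u v ∧ u ∈ S ∧ v ∈ S) :=
    fun u v ⟨ha, hu, hv⟩ => ⟨ha.symm, hv, hu⟩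
  exact (@Relation.ReflTransGen.stdSymm _ _ ⟨fun _ _ h' => hsym h'⟩).symm _ _ h

lemma isCompOf_subset {V : Type*} {G : SimpleGraph V} {A C : Set V}
    (h : IsCompOf G A C) : C ⊆ A := by
  obtain ⟨v, _, rfl⟩ := h
  exact fun w hw => hw.1

lemma comp_eq_of_inter {V : Type*} {G : SimpleGraph V} {A C C' : Set V}
    (h : IsCompOf G A C) (h' : IsCompOf G A C') (hne : (C ∩ C').Nonempty) : C = C' := by
  obtain ⟨v, hv, rfl⟩ := h
  obtain ⟨v', hv', rfl⟩ := h'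
  obtain ⟨u, ⟨huA, hvu⟩, ⟨_, hv'u⟩⟩ := hne
  ext w
  constructor
  · rintro ⟨hwA, hvw⟩
    exact ⟨hwA, hv'u.trans ((reachIn_symm hvu).trans hvw)⟩
  · rintro ⟨hwA, hv'w⟩
    exact ⟨hwA, hvu.trans ((reachIn_symm hv'u).trans hv'w)⟩

/-- Let `F` be a set of connected graphs and `n_F := min_{H∈F} |V(H)|`.
Let `G` be a graph, `X, Y ⊆ V(G)` with `G − Y` `F`-minor-free, and `X' ⊆ X ∖ Y` with
`|X'| = n_F`. Then strictly fewer than `n_F` connected components `C` of `G − X` contain a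
connected vertex set `S ⊆ C ∖ Y` such that every vertex of `X'` has a neighbor in `S`. -/
theorem stmt5 {V : Type*} [Fintype V] (F : Set FinGraph) (hFne : F.Nonempty)
    (hFconn : ∀ H ∈ F, H.adj.Connected)
    (G : SimpleGraph V) (X Y : Set V)
    (hY : ∀ H ∈ F, ¬ HasMinorOn G Yᶜ H)
    (X' : Set V) (hX'sub : X' ⊆ X \ Y)
    (hX'card : X'.ncard = sInf {m | ∃ H ∈ F, m = H.n}) :
    {C : Set V | IsCompOf G Xᶜ C ∧ ∃ S : Set V, S ⊆ C \ Y ∧ S.Nonempty ∧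
        (∀ a ∈ S, ∀ b ∈ S, ReachIn G S a b) ∧ (∀ x ∈ X', ∃ s ∈ S, G.Adj x s)}.ncard
      < sInf {m | ∃ H ∈ F, m = H.n} := by
  by_contra hcon
  push_neg at hcon
  set n := sInf {m | ∃ H ∈ F, m = H.n} with hn
  obtain ⟨H₀, hH₀F⟩ := hFne
  have hmem : n ∈ {m | ∃ H ∈ F, m = H.n} := Nat.sInf_mem ⟨H₀.n, H₀, hH₀F, rfl⟩
  obtain ⟨H, hHF, hHn⟩ := hmem
  set 𝒞 := {C : Set V | IsCompOf G Xᶜ C ∧ ∃ S : Set V, S ⊆ C \ Y ∧ S.Nonempty ∧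
      (∀ a ∈ S, ∀ b ∈ S, ReachIn G S a b) ∧ (∀ x ∈ X', ∃ s ∈ S, G.Adj x s)} with h𝒞
  obtain ⟨T, hT𝒞, hTcard⟩ := Set.exists_subset_card_eq hcon
  have hTfin : T.Finite := Set.toFinite T
  have hX'fin : X'.Finite := Set.toFinite X'
  have hTc : hTfin.toFinset.card = n := by
    rw [← Set.ncard_eq_toFinset_card T hTfin]; exact hTcard
  have hXc : hX'fin.toFinset.card = n := by
    rw [← Set.ncard_eq_toFinset_card X' hX'fin]; exact hX'card
  let fT : Fin n → Set V := fun i => ((Finset.equivFinOfCardEq hTc).symm i : Set V)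
  let xv : Fin n → V := fun i => ((Finset.equivFinOfCardEq hXc).symm i : V)
  have hfTmem : ∀ i, fT i ∈ 𝒞 := fun i =>
    hT𝒞 (hTfin.mem_toFinset.mp ((Finset.equivFinOfCardEq hTc).symm i).2)
  have hxvmem : ∀ i, xv i ∈ X' := fun i =>
    hX'fin.mem_toFinset.mp ((Finset.equivFinOfCardEq hXc).symm i).2
  have hfTinj : Function.Injective fT := fun i j h => by
    have := Subtype.coe_injective (a₁ := (Finset.equivFinOfCardEq hTc).symm i)
      (a₂ := (Finset.equivFinOfCardEq hTc).symm j) h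
    exact (Equiv.injective _) this
  have hxvinj : Function.Injective xv := fun i j h => by
    have := Subtype.coe_injective (a₁ := (Finset.equivFinOfCardEq hXc).symm i)
      (a₂ := (Finset.equivFinOfCardEq hXc).symm j) h
    exact (Equiv.injective _) this
  have hcomp : ∀ i, IsCompOf G Xᶜ (fT i) := fun i => (hfTmem i).1
  choose Sf hSsub hSne hSconn hSdom using fun i => (hfTmem i).2
  -- branch sets
  let e : Fin H.n → Fin n := Fin.cast hHn.symm
  have heinj : Function.Injective e := fun a b h => by
    simpa [e, Fin.ext_iff] using h
  let φ : Fin H.n → Set V := fun w => insert (xv (e w)) (Sf (e w))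
  -- basic facts
  have hSX : ∀ i, Sf i ⊆ Xᶜ := fun i a ha =>
    isCompOf_subset (hcomp i) ((hSsub i ha).1)
  have hSdisj : ∀ i j, i ≠ j → Disjoint (Sf i) (Sf j) := by
    intro i j hij
    rw [Set.disjoint_left]
    intro a hai haj
    exact hij (hfTinj (comp_eq_of_inter (hcomp i) (hcomp j)
      ⟨a, (hSsub i hai).1, (hSsub j haj).1⟩))
  have hxX : ∀ i, xv i ∈ X \ Y := fun i => hX'sub (hxvmem i)
  apply hY H hHF
  refine ⟨φ, ?_, ?_, ?_, ?_, ?_⟩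
  · -- sub
    intro w a ha
    rcases ha with rfl | ha
    · exact (hxX (e w)).2
    · exact (hSsub (e w) ha).2
  · -- nonempty
    intro w
    exact ⟨_, Set.mem_insert _ _⟩
  · -- conn
    intro w a ha b hb
    set i := e w
    obtain ⟨s₀, hs₀, hadj⟩ := hSdom i (xv i) (hxvmem i)
    have hx_to : ∀ c ∈ Sf i, ReachIn G (φ w) (xv i) c := by
      intro c hc
      refine Relation.ReflTransGen.head ⟨hadj, Set.mem_insert _ _, Set.mem_insert_of_mem _ hs₀⟩ ?_
      exact reachIn_mono (Set.subset_insert _ _) (hSconn i s₀ hs₀ c hc)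
    rcases ha with rfl | ha <;> rcases hb with rfl | hb
    · exact Relation.ReflTransGen.refl
    · exact hx_to b hb
    · exact reachIn_symm (hx_to a ha)
    · exact reachIn_mono (Set.subset_insert _ _) (hSconn i a ha b hb)
  · -- disj
    intro w w' hww'
    have hij : e w ≠ e w' := fun h => hww' (heinj h)
    rw [Set.disjoint_left]
    intro a ha ha'
    rcases ha with rfl | ha <;> rcases ha' with h | h
    · exact hij (hxvinj h)
    · exact (hSX (e w') h) (hxX (e w)).1
    · exact (hSX (e w) ha) (h ▸ (hxX (e w')).1)
    · exact Set.disjoint_left.mp (hSdisj _ _ hij) ha h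
  · -- edge
    intro w w' hadj
    obtain ⟨s, hs, hGs⟩ := hSdom (e w') (xv (e w)) (hxvmem (e w))
    exact ⟨xv (e w), Set.mem_insert _ _, s, Set.mem_insert_of_mem _ hs, hGs⟩

end

end FDel
end
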